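/- Let F be a weakly convex sparseness measure with parameter ρ ≤ 0, J(x) = Σ_{i=1}^N F(x_i), let γ ∈ [0,1) be a null-space constant bound for (J,A,K), let M0 > 0, and define C1 = (F(M0)/M0)·(1−γ)/(1+γ) and C2 = (α√N + C1)/(C1·σ). Let ‖x*‖₀ ≤ K, y = A x* + e, κ > 0, μ > 1. Suppose x ∈ ℝ^N satisfies A x = y, ‖x − x*‖₂ ≤ M0, (−4ρ)·‖x − x*‖₂ ≤ C1, and ‖x − x*‖₂ ≥ (2μα²N/C1)·κ + 4·C2·‖e‖₂. Then for any gradient selection g with g_i ∈ ∂F(x_i), the next PGG iterate x⁺ = x̃ + A†(y − A x̃) with x̃ = x − κ·g satisfies ‖x⁺ − x*‖₂² ≤ ‖x − x*‖₂² − (μ−1)·α²·N·κ². -/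

import Mathlib

open Filter Set

/-- Weak convexity on `[0,∞)` with parameter `ρ`. -/
def WeaklyConvexOnNonneg (F : ℝ → ℝ) (ρ : ℝ) : Prop :=
  ∀ t₁ t₂ : ℝ, 0 ≤ t₁ → 0 ≤ t₂ → ∀ l : ℝ, 0 ≤ l → l ≤ 1 →
    F (l * t₁ + (1 - l) * t₂) ≤
      l * F t₁ + (1 - l) * F t₂ - ρ * l * (1 - l) * (t₁ - t₂) ^ 2

/-- `F` is a weakly convex sparseness measure with weak-convexity parameter `ρ ≤ 0`. -/
structure IsWCSM (F : ℝ → ℝ) (ρ : ℝ) : Prop where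
  zero : F 0 = 0
  even : ∀ t, F (-t) = F t
  nontrivial : ∃ t, F t ≠ 0
  mono : ∀ s t : ℝ, 0 ≤ s → s ≤ t → F s ≤ F t
  ratio_anti : ∀ s t : ℝ, 0 < s → s ≤ t → F t / t ≤ F s / s
  rho_nonpos : ρ ≤ 0
  wconv : WeaklyConvexOnNonneg F ρ

/-- `α = lim_{t→0⁺} F(t)/t`, finite and positive, with `F(t) ≤ α|t|` for all `t`. -/
def IsAlpha (F : ℝ → ℝ) (α : ℝ) : Prop :=
  0 < α ∧ Tendsto (fun t => F t / t) (nhdsWithin 0 (Set.Ioi 0)) (nhds α) ∧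
    ∀ t : ℝ, F t ≤ α * |t|

/-- The generalized gradient set `∂F(t)`; by convention `∂F(0) = {0}`. -/
noncomputable def genGrad (F : ℝ → ℝ) (t : ℝ) : Set ℝ :=
  if t = 0 then {0}
  else {f : ℝ | ∀ ν : ℝ,
    ν * f ≤ Filter.limsup (fun θ => (F (t + θ * ν) - F t) / θ) (nhdsWithin 0 (Set.Ioi 0))}

/-- Euclidean (`ℓ2`) norm of a vector. -/
noncomputable def l2 {n : ℕ} (x : Fin n → ℝ) : ℝ := Real.sqrt (∑ i, (x i) ^ 2)

/-- `ℓ1` norm of a vector. -/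
def l1 {n : ℕ} (x : Fin n → ℝ) : ℝ := ∑ i, |x i|

/-- `ℓ0` "norm": number of nonzero entries. -/
noncomputable def l0 {n : ℕ} (x : Fin n → ℝ) : ℕ :=
  (Finset.univ.filter (fun i => x i ≠ 0)).card

/-- `z_S`: the vector equal to `z` on `S` and zero elsewhere. -/
def restr {n : ℕ} (x : Fin n → ℝ) (S : Finset (Fin n)) : Fin n → ℝ :=
  fun i => if i ∈ S then x i else 0

/-- `γ` is a null-space-constant bound for `(J, A, K)`. -/
def NSCBound {M N : ℕ} (J : (Fin N → ℝ) → ℝ) (A : Matrix (Fin M) (Fin N) ℝ)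
    (K : ℕ) (γ : ℝ) : Prop :=
  ∀ z : Fin N → ℝ, A.mulVec z = 0 → ∀ S : Finset (Fin N), S.card ≤ K →
    J (restr z S) ≤ γ * J (restr z Sᶜ)

/-- Spectral norm (`ℓ2`-operator norm) of a matrix. -/
noncomputable def opNorm2 {m n : ℕ} (A : Matrix (Fin m) (Fin n) ℝ) : ℝ :=
  sSup {c : ℝ | ∃ v : Fin n → ℝ, l2 v ≤ 1 ∧ c = l2 (A.mulVec v)}

-- helpers
lemma F_abs {F ρ} (hF : IsWCSM F ρ) (t : ℝ) : F t = F |t| := by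
  rcases abs_choice t with h | h
  · rw [h]
  · rw [h, hF.even]

lemma F_nonneg {F ρ} (hF : IsWCSM F ρ) (t : ℝ) : 0 ≤ F t := by
  rw [F_abs hF]
  have := hF.mono 0 |t| le_rfl (abs_nonneg t)
  simpa [hF.zero] using this

lemma F_subadd {F ρ} (hF : IsWCSM F ρ) (u v : ℝ) : F (u + v) ≤ F u + F v := by
  have h1 : F (u + v) ≤ F (|u| + |v|) := by
    rw [F_abs hF (u+v)]
    exact hF.mono _ _ (abs_nonneg _) (abs_add_le u v)
  rcases eq_or_lt_of_le (abs_nonneg u) with hu | hu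
  · rw [F_abs hF u, ← hu, hF.zero]
    simpa [← hu, F_abs hF v] using h1
  rcases eq_or_lt_of_le (abs_nonneg v) with hv | hv
  · rw [F_abs hF v, ← hv, hF.zero]
    simpa [← hv, F_abs hF u] using h1
  have key : F (|u| + |v|) ≤ F |u| + F |v| := by
    have ha := hF.ratio_anti |u| (|u| + |v|) hu (by linarith)
    have hb := hF.ratio_anti |v| (|u| + |v|) hv (by linarith)
    have hs : (0:ℝ) < |u| + |v| := by linarith
    have h1' : |u| * (F (|u|+|v|) / (|u|+|v|)) ≤ F |u| := by
      have := mul_le_mul_of_nonneg_left ha (le_of_lt hu)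
      calc |u| * (F (|u|+|v|) / (|u|+|v|)) ≤ |u| * (F |u| / |u|) := this
        _ = F |u| := by field_simp
    have h2' : |v| * (F (|u|+|v|) / (|u|+|v|)) ≤ F |v| := by
      have := mul_le_mul_of_nonneg_left hb (le_of_lt hv)
      calc |v| * (F (|u|+|v|) / (|u|+|v|)) ≤ |v| * (F |v| / |v|) := this
        _ = F |v| := by field_simp
    have : F (|u|+|v|) = |u| * (F (|u|+|v|) / (|u|+|v|)) + |v| * (F (|u|+|v|) / (|u|+|v|)) := by
      field_simp
    linarith
  calc F (u+v) ≤ F (|u| + |v|) := h1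
    _ ≤ F |u| + F |v| := key
    _ = F u + F v := by rw [← F_abs hF, ← F_abs hF]

lemma F_lip {F ρ α} (hF : IsWCSM F ρ) (hα : IsAlpha F α) (u v : ℝ) :
    F u - F v ≤ α * |u - v| := by
  have := F_subadd hF v (u - v)
  have h2 := hα.2.2 (u - v)
  simp only [add_sub_cancel] at this
  linarith

-- G := F - ρ t^2 is convex on ℝ
lemma G_conv {F ρ} (hF : IsWCSM F ρ) (a b l : ℝ) (hl0 : 0 ≤ l) (hl1 : l ≤ 1) :
    F (l*a + (1-l)*b) - ρ * (l*a + (1-l)*b)^2 ≤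
      l * (F a - ρ * a^2) + (1-l) * (F b - ρ * b^2) := by
  set G : ℝ → ℝ := fun t => F t - ρ * t^2 with hG
  have Geven : ∀ t, G (-t) = G t := fun t => by simp [hG, hF.even]
  have Gabs : ∀ t, G t = G |t| := by
    intro t; rcases abs_choice t with h | h
    · rw [h]
    · rw [h, Geven]
  have Gmono : ∀ s t : ℝ, 0 ≤ s → s ≤ t → G s ≤ G t := by
    intro s t hs hst
    have h1 := hF.mono s t hs hst
    have h2 : -ρ * s^2 ≤ -ρ * t^2 := by
      apply mul_le_mul_of_nonneg_left _ (by linarith [hF.rho_nonpos])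
      nlinarith
    simp only [hG]; nlinarith
  have Gconv0 : ∀ s t : ℝ, 0 ≤ s → 0 ≤ t → G (l*s + (1-l)*t) ≤ l * G s + (1-l) * G t := by
    intro s t hs ht
    have := hF.wconv s t hs ht l hl0 hl1
    simp only [hG]
    nlinarith [this]
  have key : G (l*a + (1-l)*b) ≤ l * G a + (1-l) * G b := by
    have h1 : |l*a + (1-l)*b| ≤ l*|a| + (1-l)*|b| := by
      calc |l*a + (1-l)*b| ≤ |l*a| + |(1-l)*b| := abs_add_le _ _
        _ = l*|a| + (1-l)*|b| := by
            rw [abs_mul, abs_mul, abs_of_nonneg hl0,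
              abs_of_nonneg (show (0:ℝ) ≤ 1 - l by linarith)]
    calc G (l*a + (1-l)*b) = G |l*a + (1-l)*b| := Gabs _
      _ ≤ G (l*|a| + (1-l)*|b|) := Gmono _ _ (abs_nonneg _) h1
      _ ≤ l * G |a| + (1-l) * G |b| := Gconv0 _ _ (abs_nonneg _) (abs_nonneg _)
      _ = l * G a + (1-l) * G b := by rw [← Gabs, ← Gabs]
  exact key

lemma limsup_le_of_ev {u : ℝ → ℝ} {a b : ℝ}
    (hb : ∀ᶠ θ in nhdsWithin (0:ℝ) (Ioi 0), b ≤ u θ)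
    (ha : ∀ᶠ θ in nhdsWithin (0:ℝ) (Ioi 0), u θ ≤ a) :
    Filter.limsup u (nhdsWithin (0:ℝ) (Ioi 0)) ≤ a :=
  Filter.limsup_le_of_le (Filter.isCoboundedUnder_le_of_eventually_le _ hb) ha

-- subgradient inequality
lemma subgrad_ineq {F ρ α} (hF : IsWCSM F ρ) (hα : IsAlpha F α)
    {t : ℝ} {g : ℝ} (hg : g ∈ genGrad F t) (u : ℝ) :
    g * (u - t) ≤ F u - F t - ρ * (u - t)^2 := by
  by_cases ht : t = 0
  · subst ht
    simp only [genGrad, if_pos rfl, Set.mem_singleton_iff] at hg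
    subst hg
    simp only [hF.zero]
    nlinarith [F_nonneg hF u, mul_nonneg (show (0:ℝ) ≤ -ρ by linarith [hF.rho_nonpos])
      (sq_nonneg (u - 0))]
  · simp only [genGrad, if_neg ht, Set.mem_setOf_eq] at hg
    have hkey := hg (u - t)
    have hbound : Filter.limsup (fun θ => (F (t + θ * (u - t)) - F t) / θ) (nhdsWithin 0 (Ioi 0))
        ≤ F u - F t - ρ * (u - t)^2 := by
      apply limsup_le_of_ev (b := -(α * |u - t|))
      · filter_upwards [self_mem_nhdsWithin] with θ (hθ : θ ∈ Ioi (0:ℝ))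
        have hθ' : (0:ℝ) < θ := hθ
        have hl := F_lip hF hα t (t + θ*(u-t))
        have habs : |t - (t + θ*(u-t))| = θ * |u-t| := by
          rw [show t - (t + θ*(u-t)) = -(θ*(u-t)) by ring, abs_neg, abs_mul, abs_of_pos hθ']
        rw [habs] at hl
        rw [le_div_iff₀ hθ']
        nlinarith [hl]
      have hIoc : Ioc (0:ℝ) 1 ∈ nhdsWithin (0:ℝ) (Ioi 0) :=
        Ioc_mem_nhdsGT_of_mem (by constructor <;> norm_num)
      filter_upwards [hIoc] with θ hθ
      obtain ⟨hθ0, hθ1⟩ := hθ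
      have hconv := G_conv hF u t θ (le_of_lt hθ0) hθ1
      have heq : θ * u + (1 - θ) * t = t + θ * (u - t) := by ring
      rw [heq] at hconv
      rw [div_le_iff₀ hθ0]
      have h1 : ρ * (θ^2 * (u-t)^2) ≤ 0 :=
        mul_nonpos_of_nonpos_of_nonneg hF.rho_nonpos
          (mul_nonneg (sq_nonneg θ) (sq_nonneg _))
      have h2 : ρ * (θ * (u-t)^2) ≤ 0 :=
        mul_nonpos_of_nonpos_of_nonneg hF.rho_nonpos
          (mul_nonneg hθ0.le (sq_nonneg _))
      nlinarith [hconv, h1, h2]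
    linarith [hkey.trans hbound]

-- |g| ≤ α
lemma grad_abs_le {F ρ α} (hF : IsWCSM F ρ) (hα : IsAlpha F α)
    {t : ℝ} {g : ℝ} (hg : g ∈ genGrad F t) : |g| ≤ α := by
  by_cases ht : t = 0
  · subst ht
    simp only [genGrad, if_pos rfl, Set.mem_singleton_iff] at hg
    subst hg
    simpa using le_of_lt hα.1
  · simp only [genGrad, if_neg ht, Set.mem_setOf_eq] at hg
    have key : ∀ ν : ℝ, ν * g ≤ α * |ν| := by
      intro ν
      refine (hg ν).trans ?_
      apply limsup_le_of_ev (b := -(α * |ν|))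
      · filter_upwards [self_mem_nhdsWithin] with θ (hθ : θ ∈ Ioi (0:ℝ))
        have hθ' : (0:ℝ) < θ := hθ
        have hl := F_lip hF hα t (t + θ*ν)
        have habs : |t - (t + θ*ν)| = θ * |ν| := by
          rw [show t - (t + θ*ν) = -(θ*ν) by ring, abs_neg, abs_mul, abs_of_pos hθ']
        rw [habs] at hl
        rw [le_div_iff₀ hθ']
        nlinarith [hl]
      filter_upwards [self_mem_nhdsWithin] with θ (hθ : θ ∈ Ioi (0:ℝ))
      have hθ' : (0:ℝ) < θ := hθ
      have hl := F_lip hF hα (t + θ*ν) t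
      have habs : |t + θ*ν - t| = θ * |ν| := by
        rw [add_sub_cancel_left, abs_mul, abs_of_pos hθ']
      rw [habs] at hl
      rw [div_le_iff₀ hθ']
      nlinarith [hl]
    have h1 := key 1
    have h2 := key (-1)
    simp at h1 h2
    rw [abs_le]; constructor <;> linarith

-- vector lemmas
lemma l2_nonneg {n : ℕ} (v : Fin n → ℝ) : 0 ≤ l2 v := Real.sqrt_nonneg _

lemma l2_sq {n : ℕ} (v : Fin n → ℝ) : l2 v ^ 2 = ∑ i, (v i) ^ 2 :=
  Real.sq_sqrt (Finset.sum_nonneg fun i _ => sq_nonneg _)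

lemma ip_le_l2 {n : ℕ} (u v : Fin n → ℝ) : ∑ i, u i * v i ≤ l2 u * l2 v := by
  have h := Finset.sum_mul_sq_le_sq_mul_sq Finset.univ u v
  calc ∑ i, u i * v i ≤ |∑ i, u i * v i| := le_abs_self _
    _ = Real.sqrt ((∑ i, u i * v i)^2) := (Real.sqrt_sq_eq_abs _).symm
    _ ≤ Real.sqrt ((∑ i, u i ^2) * (∑ i, v i ^2)) := Real.sqrt_le_sqrt h
    _ = l2 u * l2 v := by
        rw [l2, l2, ← Real.sqrt_mul (Finset.sum_nonneg fun i _ => sq_nonneg _)]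

lemma l2_add_le {n : ℕ} (u v : Fin n → ℝ) : l2 (u + v) ≤ l2 u + l2 v := by
  have h1 : ∑ i, (u i + v i)^2 ≤ (l2 u + l2 v)^2 := by
    have hip := ip_le_l2 u v
    have : ∑ i, (u i + v i)^2 = ∑ i, (u i)^2 + 2 * (∑ i, u i * v i) + ∑ i, (v i)^2 := by
      rw [Finset.mul_sum, ← Finset.sum_add_distrib, ← Finset.sum_add_distrib]
      exact Finset.sum_congr rfl fun i _ => by ring
    rw [this]
    have := l2_sq u; have := l2_sq v
    nlinarith [l2_sq u, l2_sq v]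
  calc l2 (u + v) = Real.sqrt (∑ i, (u i + v i)^2) := by rw [l2]; rfl
    _ ≤ Real.sqrt ((l2 u + l2 v)^2) := Real.sqrt_le_sqrt h1
    _ = |l2 u + l2 v| := Real.sqrt_sq_eq_abs _
    _ = l2 u + l2 v := abs_of_nonneg (add_nonneg (l2_nonneg u) (l2_nonneg v))

lemma l2_le_l1 {n : ℕ} (v : Fin n → ℝ) : l2 v ≤ l1 v := by
  have h : ∑ i, (v i)^2 ≤ (∑ i, |v i|)^2 := by
    have h0 : ∀ i ∈ Finset.univ, (0:ℝ) ≤ |v i| := fun i _ => abs_nonneg _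
    have := Finset.sum_sq_le_sq_sum_of_nonneg h0
    simpa [sq_abs] using this
  calc l2 v ≤ Real.sqrt ((∑ i, |v i|)^2) := Real.sqrt_le_sqrt h
    _ = abs (∑ i, |v i|) := Real.sqrt_sq_eq_abs _
    _ = l1 v := by
        rw [l1, abs_of_nonneg (Finset.sum_nonneg fun i _ => abs_nonneg _)]

lemma l1_le_sqrt_l2 {n : ℕ} (v : Fin n → ℝ) : l1 v ≤ Real.sqrt n * l2 v := by
  have h := Finset.sum_mul_sq_le_sq_mul_sq Finset.univ (fun _ : Fin n => (1:ℝ)) (fun i => |v i|)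
  simp only [one_pow, one_mul, Finset.sum_const, Finset.card_univ, Fintype.card_fin,
    nsmul_eq_mul, mul_one, sq_abs] at h
  calc l1 v = Real.sqrt ((∑ i, |v i|)^2) := by
        rw [Real.sqrt_sq (Finset.sum_nonneg fun i _ => abs_nonneg _)]; rfl
    _ ≤ Real.sqrt ((n : ℝ) * ∑ i, (v i)^2) := Real.sqrt_le_sqrt h
    _ = Real.sqrt n * l2 v := by rw [Real.sqrt_mul (Nat.cast_nonneg n), l2]

lemma ip_mulVec_left {m n : ℕ} (B : Matrix (Fin n) (Fin m) ℝ) (e : Fin m → ℝ)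
    (z : Fin n → ℝ) : ∑ i, (B.mulVec e) i * z i = ∑ j, e j * (B.transpose.mulVec z) j := by
  simp only [Matrix.mulVec, dotProduct, Matrix.transpose_apply, Finset.sum_mul,
    Finset.mul_sum]
  rw [Finset.sum_comm]
  exact Finset.sum_congr rfl fun j _ => Finset.sum_congr rfl fun i _ => by ring

lemma final_key {r IP Q2 α N κ μ : ℝ} (hκ : 0 < κ) (hμ : 1 < μ)
    (hQ2 : Q2 ≤ N * α ^ 2) (hIP : (3/2)*(μ*(α^2*N*κ)) ≤ IP)
    (hmuN : 0 ≤ μ*(α^2*N*κ^2)) :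
    r^2 - 2*κ*IP + κ^2*Q2 ≤ r^2 - (μ-1)*α^2*N*κ^2 := by
  have h2κ := mul_le_mul_of_nonneg_left hIP (by linarith : (0:ℝ) ≤ 2*κ)
  have hκ2q := mul_le_mul_of_nonneg_left hQ2 (sq_nonneg κ)
  nlinarith [h2κ, hκ2q, hmuN]

lemma gamma_key {γ : ℝ} (hγ0 : 0 ≤ γ) (hγ1 : γ < 1) (a b : ℝ) (hb : 0 ≤ b)
    (hab : a ≤ γ * b) : (1 - γ) / (1 + γ) * (a + b) ≤ b - a := by
  rw [div_mul_eq_mul_div, div_le_iff₀ (by linarith : (0:ℝ) < 1 + γ)]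
  nlinarith

set_option maxHeartbeats 1600000 in

set_option maxHeartbeats 1600000 in
/-- Lemma 5, one PGG step: if the current iterate `x` is within the
good region and not too close to `x*`, the next PGG iterate strictly decreases the
squared distance by at least `(μ−1)α²Nκ²`. -/
theorem stmt12 {M N : ℕ} (hMN : M < N) (F : ℝ → ℝ) (ρ α : ℝ)
    (hF : IsWCSM F ρ) (hα : IsAlpha F α)
    (A : Matrix (Fin M) (Fin N) ℝ) (hinv : IsUnit (A * A.transpose).det) (K : ℕ)
    (γ : ℝ) (hγ0 : 0 ≤ γ) (hγ1 : γ < 1)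
    (hNSC : NSCBound (fun x => ∑ i, F (x i)) A K γ)
    (σ : ℝ) (hσ : 0 < σ)
    (hσmin : ∀ v : Fin N → ℝ,
      (∀ z : Fin N → ℝ, A.mulVec z = 0 → (∑ i, v i * z i) = 0) →
      σ * l2 v ≤ l2 (A.mulVec v))
    (M0 : ℝ) (hM0 : 0 < M0) (C1 C2 : ℝ)
    (hC1 : C1 = F M0 / M0 * ((1 - γ) / (1 + γ)))
    (hC2 : C2 = (α * Real.sqrt N + C1) / (C1 * σ))
    (xs : Fin N → ℝ) (hxs : l0 xs ≤ K)
    (e : Fin M → ℝ) (y : Fin M → ℝ) (hy : y = A.mulVec xs + e)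
    (κ μ : ℝ) (hκ : 0 < κ) (hμ : 1 < μ)
    (x : Fin N → ℝ) (hfeas : A.mulVec x = y)
    (hball : l2 (x - xs) ≤ M0)
    (hrho : -4 * ρ * l2 (x - xs) ≤ C1)
    (hfar : 2 * μ * α ^ 2 * N / C1 * κ + 4 * C2 * l2 e ≤ l2 (x - xs))
    (g : Fin N → ℝ) (hg : ∀ i, g i ∈ genGrad F (x i))
    (xt xp : Fin N → ℝ)
    (hxt : xt = x - κ • g)
    (hxp : xp = xt + (A.transpose * (A * A.transpose)⁻¹).mulVec (y - A.mulVec xt)) :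
    l2 (xp - xs) ^ 2 ≤ l2 (x - xs) ^ 2 - (μ - 1) * α ^ 2 * N * κ ^ 2 := by
  -- matrix setup
  set Bm := A.transpose * (A * A.transpose)⁻¹ with hBm
  set P := Bm * A with hPdef
  have hABm : A * Bm = 1 := by
    rw [hBm, ← Matrix.mul_assoc]
    exact Matrix.mul_nonsing_inv _ hinv
  have hinvsym : ((A * A.transpose)⁻¹).transpose = (A * A.transpose)⁻¹ := by
    rw [Matrix.transpose_nonsing_inv, Matrix.transpose_mul, Matrix.transpose_transpose]
  have hPsym : P.transpose = P := by
    rw [hPdef, hBm, Matrix.transpose_mul, Matrix.transpose_mul, Matrix.transpose_transpose,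
      hinvsym, Matrix.mul_assoc]
  have hPP : P * P = P := by
    rw [hPdef, Matrix.mul_assoc, ← Matrix.mul_assoc A Bm A, hABm, Matrix.one_mul]
  have ip_symm : ∀ u v : Fin N → ℝ,
      ∑ i, (P.mulVec u) i * v i = ∑ i, u i * (P.mulVec v) i := by
    intro u v
    rw [ip_mulVec_left P u v, hPsym]
  -- vectors
  have hAd : A.mulVec (x - xs) = e := by
    rw [Matrix.mulVec_sub, hfeas, hy, add_sub_cancel_left]
  set w := Bm.mulVec e with hw
  have hAw : A.mulVec w = e := by
    rw [hw, Matrix.mulVec_mulVec, hABm, Matrix.one_mulVec]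
  set z := (x - xs) - w with hz
  have hAz : A.mulVec z = 0 := by
    rw [hz, Matrix.mulVec_sub, hAd, hAw, sub_self]
  have hPd : P.mulVec (x - xs) = w := by
    rw [hPdef, ← Matrix.mulVec_mulVec, hAd, hw]
  have hWE : σ * l2 w ≤ l2 e := by
    have horth : ∀ z' : Fin N → ℝ, A.mulVec z' = 0 → ∑ i, w i * z' i = 0 := by
      intro z' hz'
      rw [hw, ip_mulVec_left]
      have hBt : Bm.transpose.mulVec z' = 0 := by
        rw [hBm, Matrix.transpose_mul, Matrix.transpose_transpose, hinvsym,
          ← Matrix.mulVec_mulVec, hz', Matrix.mulVec_zero]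
      simp [hBt]
    have := hσmin w horth
    rwa [hAw] at this
  -- next iterate
  set q : Fin N → ℝ := g - P.mulVec g with hqdef
  have hxpxs : xp - xs = (x - xs) - κ • q := by
    rw [hxp, hxt]
    have h1 : A.mulVec (x - κ • g) = y - κ • A.mulVec g := by
      rw [Matrix.mulVec_sub, Matrix.mulVec_smul, hfeas]
    rw [h1, sub_sub_cancel, Matrix.mulVec_smul, Matrix.mulVec_mulVec, ← hPdef, hqdef,
      smul_sub]
    abel
  -- expansion
  have hexp : l2 (xp - xs) ^ 2 = l2 (x - xs) ^ 2
      - 2 * κ * (∑ i, q i * (x i - xs i)) + κ ^ 2 * ∑ i, (q i) ^ 2 := by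
    rw [hxpxs, l2_sq, l2_sq]
    simp only [Pi.sub_apply, Pi.smul_apply, smul_eq_mul]
    rw [show (∑ i, (x i - xs i - κ * q i) ^ 2)
        = ∑ i, ((x i - xs i) ^ 2 - 2 * κ * (q i * (x i - xs i)) + κ ^ 2 * (q i) ^ 2)
      from Finset.sum_congr rfl fun i _ => by ring]
    rw [Finset.sum_add_distrib, Finset.sum_sub_distrib, ← Finset.mul_sum, ← Finset.mul_sum]
  -- gradient bounds
  have hgi : ∀ i, |g i| ≤ α := fun i => grad_abs_le hF hα (hg i)
  have hg2 : ∑ i, (g i) ^ 2 ≤ (N : ℝ) * α ^ 2 := by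
    calc ∑ i, (g i) ^ 2 ≤ ∑ _i : Fin N, α ^ 2 :=
          Finset.sum_le_sum fun i _ => by
            have h1 := hgi i
            nlinarith [abs_nonneg (g i), sq_abs (g i)]
      _ = (N : ℝ) * α ^ 2 := by
          simp [Finset.sum_const, Finset.card_univ]
  have hl2g : l2 g ≤ Real.sqrt N * α := by
    rw [l2]
    calc Real.sqrt (∑ i, (g i) ^ 2) ≤ Real.sqrt ((N : ℝ) * α ^ 2) := Real.sqrt_le_sqrt hg2
      _ = Real.sqrt N * α := by
          rw [Real.sqrt_mul (Nat.cast_nonneg _), Real.sqrt_sq hα.1.le]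
  -- projection bound
  have hq2 : ∑ i, (q i) ^ 2 ≤ (N : ℝ) * α ^ 2 := by
    have h2 : P.mulVec (P.mulVec g) = P.mulVec g := by
      rw [Matrix.mulVec_mulVec, hPP]
    have hPgg : ∑ i, g i * (P.mulVec g) i = ∑ i, ((P.mulVec g) i) ^ 2 := by
      have h1 := ip_symm (P.mulVec g) g
      rw [h2] at h1
      calc ∑ i, g i * (P.mulVec g) i
          = ∑ i, (P.mulVec g) i * g i := Finset.sum_congr rfl fun i _ => by ring
        _ = ∑ i, ((P.mulVec g) i) ^ 2 := by
            rw [h1]; exact Finset.sum_congr rfl fun i _ => by ring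
    have hqexp : ∑ i, (q i) ^ 2
        = ∑ i, (g i) ^ 2 - 2 * (∑ i, g i * (P.mulVec g) i) + ∑ i, ((P.mulVec g) i) ^ 2 := by
      rw [Finset.mul_sum, ← Finset.sum_sub_distrib, ← Finset.sum_add_distrib]
      refine Finset.sum_congr rfl fun i _ => ?_
      rw [hqdef]
      simp only [Pi.sub_apply]
      ring
    have hPg2 : (0:ℝ) ≤ ∑ i, ((P.mulVec g) i) ^ 2 :=
      Finset.sum_nonneg fun i _ => sq_nonneg _
    have : ∑ i, (q i) ^ 2 ≤ ∑ i, (g i) ^ 2 := by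
      rw [hqexp, hPgg]; linarith
    linarith [hg2]
  -- subgradient sum bound
  have hsum_sub : (∑ i, F (x i)) - (∑ i, F (xs i)) + ρ * l2 (x - xs) ^ 2
      ≤ ∑ i, g i * (x i - xs i) := by
    have h2 := Finset.sum_le_sum (s := Finset.univ)
      (fun i _ => subgrad_ineq hF hα (hg i) (xs i))
    have h3 : ∑ i, (F (xs i) - F (x i) - ρ * (xs i - x i) ^ 2)
        = (∑ i, F (xs i)) - (∑ i, F (x i)) - ρ * ∑ i, (x i - xs i) ^ 2 := by
      rw [Finset.mul_sum, ← Finset.sum_sub_distrib, ← Finset.sum_sub_distrib]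
      exact Finset.sum_congr rfl fun i _ => by ring
    have h4 : ∑ i, g i * (xs i - x i) = -∑ i, g i * (x i - xs i) := by
      rw [← Finset.sum_neg_distrib]
      exact Finset.sum_congr rfl fun i _ => by ring
    have h5 : l2 (x - xs) ^ 2 = ∑ i, (x i - xs i) ^ 2 := by
      rw [l2_sq]; exact Finset.sum_congr rfl fun i _ => by simp
    rw [h3, h4] at h2
    rw [h5]
    linarith
  -- the support set
  set S : Finset (Fin N) := Finset.univ.filter (fun i => xs i ≠ 0) with hS
  have hScard : S.card ≤ K := hxs
  have hNSCz := hNSC z hAz S hScard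
  have hrestr : ∀ (T : Finset (Fin N)), ∑ i, F (restr z T i) = ∑ i ∈ T, F (z i) := by
    intro T
    have : ∀ i, F (restr z T i) = if i ∈ T then F (z i) else 0 := by
      intro i; rw [restr]; split <;> simp [hF.zero]
    simp only [this]
    simp [Finset.sum_ite_mem]
  simp only [hrestr] at hNSCz
  -- split sums
  have hFd_nonneg : ∀ (v : Fin N → ℝ) (i : Fin N), 0 ≤ F (v i) := fun v i => F_nonneg hF _
  -- J x - J xs ≥ ∑_{Sᶜ} F d - ∑_S F d
  have hJd : (∑ i ∈ Sᶜ, F (x i - xs i)) - ∑ i ∈ S, F (x i - xs i)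
      ≤ (∑ i, F (x i)) - ∑ i, F (xs i) := by
    have hc : ∀ i ∈ Sᶜ, F (x i - xs i) = F (x i) - F (xs i) := by
      intro i hi
      have : xs i = 0 := by
        have := Finset.mem_compl.mp hi
        simp [hS] at this
        exact this
      rw [this, hF.zero, sub_zero, sub_zero]
    have hs' : ∀ i ∈ S, -(F (x i - xs i)) ≤ F (x i) - F (xs i) := by
      intro i _
      have h1 := F_subadd hF (x i) (xs i - x i)
      have h2 : F (xs i - x i) = F (x i - xs i) := by
        rw [F_abs hF (xs i - x i), F_abs hF (x i - xs i), abs_sub_comm]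
      rw [show x i + (xs i - x i) = xs i by ring, h2] at h1
      linarith
    have e1 : ∑ i ∈ Sᶜ, F (x i - xs i) = ∑ i ∈ Sᶜ, (F (x i) - F (xs i)) :=
      Finset.sum_congr rfl hc
    have e2 : ∑ i ∈ S, (-(F (x i - xs i))) ≤ ∑ i ∈ S, (F (x i) - F (xs i)) :=
      Finset.sum_le_sum hs'
    have e3 : (∑ i, (F (x i) - F (xs i)))
        = (∑ i ∈ S, (F (x i) - F (xs i))) + ∑ i ∈ Sᶜ, (F (x i) - F (xs i)) :=
      (Finset.sum_add_sum_compl S _).symm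
    have e4 : (∑ i, (F (x i) - F (xs i))) = (∑ i, F (x i)) - ∑ i, F (xs i) :=
      Finset.sum_sub_distrib _ _
    have e5 : ∑ i ∈ S, (-(F (x i - xs i))) = -∑ i ∈ S, F (x i - xs i) :=
      Finset.sum_neg_distrib _
    linarith
  -- pass from d to z
  have hdz : (∑ i ∈ Sᶜ, F (z i)) - (∑ i ∈ S, F (z i)) - (∑ i, F (w i))
      ≤ (∑ i ∈ Sᶜ, F (x i - xs i)) - ∑ i ∈ S, F (x i - xs i) := by
    have k1 : ∀ i, F (z i) ≤ F (x i - xs i) + F (w i) := by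
      intro i
      have := F_subadd hF (x i - xs i) (-(w i))
      have h2 : F (-(w i)) = F (w i) := hF.even _
      have h3 : z i = x i - xs i + -(w i) := by rw [hz]; simp only [Pi.sub_apply]; ring
      rw [← h3, h2] at this
      exact this
    have k2 : ∀ i, F (x i - xs i) ≤ F (z i) + F (w i) := by
      intro i
      have := F_subadd hF (z i) (w i)
      have h3 : z i + w i = x i - xs i := by rw [hz]; simp
      rw [h3] at this
      exact this
    have e1 : ∑ i ∈ Sᶜ, F (z i) ≤ ∑ i ∈ Sᶜ, (F (x i - xs i) + F (w i)) :=
      Finset.sum_le_sum fun i _ => k1 i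
    have e2 : ∑ i ∈ S, F (x i - xs i) ≤ ∑ i ∈ S, (F (z i) + F (w i)) :=
      Finset.sum_le_sum fun i _ => k2 i
    have e3 : (∑ i, F (w i)) = (∑ i ∈ S, F (w i)) + ∑ i ∈ Sᶜ, F (w i) :=
      (Finset.sum_add_sum_compl S _).symm
    rw [Finset.sum_add_distrib] at e1 e2
    linarith
  -- NSC step
  have hγsum : (1 - γ) / (1 + γ) * (∑ i, F (z i))
      ≤ (∑ i ∈ Sᶜ, F (z i)) - ∑ i ∈ S, F (z i) := by
    have e3 : (∑ i, F (z i)) = (∑ i ∈ S, F (z i)) + ∑ i ∈ Sᶜ, F (z i) :=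
      (Finset.sum_add_sum_compl S _).symm
    have hFS : (0:ℝ) ≤ ∑ i ∈ S, F (z i) := Finset.sum_nonneg fun i _ => F_nonneg hF _
    have hFSc : (0:ℝ) ≤ ∑ i ∈ Sᶜ, F (z i) := Finset.sum_nonneg fun i _ => F_nonneg hF _
    rw [e3]
    exact gamma_key hγ0 hγ1 _ _ hFSc hNSCz
  -- F M0 / M0 > 0
  have hφ : 0 < F M0 / M0 := by
    obtain ⟨t0, ht0⟩ := hF.nontrivial
    have habs0 : F |t0| ≠ 0 := by rwa [← F_abs hF]
    have ht0pos : 0 < |t0| := by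
      rcases eq_or_lt_of_le (abs_nonneg t0) with h | h
      · exfalso; apply habs0; rw [← h, hF.zero]
      · exact h
    have hFt0 : 0 < F |t0| := lt_of_le_of_ne (F_nonneg hF _) (Ne.symm habs0)
    rcases le_or_gt |t0| M0 with h | h
    · exact div_pos (lt_of_lt_of_le hFt0 (hF.mono _ _ ht0pos.le h)) hM0
    · have := hF.ratio_anti M0 |t0| hM0 h.le
      exact lt_of_lt_of_le (div_pos hFt0 ht0pos) this
  -- lower bound on ∑ F z
  have hJz : F M0 / M0 * (l2 (x - xs) - l2 w) ≤ ∑ i, F (z i) := by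
    have hmin : ∀ i, F M0 / M0 * min |z i| M0 ≤ F (z i) := by
      intro i
      rcases le_or_gt |z i| M0 with h | h
      · rw [min_eq_left h]
        rcases eq_or_lt_of_le (abs_nonneg (z i)) with h0 | h0
        · rw [← h0, mul_zero]; exact F_nonneg hF _
        · have := hF.ratio_anti |z i| M0 h0 h
          rw [F_abs hF (z i)]
          rw [div_le_div_iff₀ hM0 h0] at this
          rw [div_mul_eq_mul_div, div_le_iff₀ hM0]
          linarith
      · rw [min_eq_right h.le]
        have : F M0 ≤ F |z i| := hF.mono _ _ hM0.le h.le
        rw [F_abs hF (z i)]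
        calc F M0 / M0 * M0 = F M0 := by field_simp
          _ ≤ F |z i| := this
    have hminsum : min (l2 z) M0 ≤ ∑ i, min |z i| M0 := by
      by_cases hall : ∀ i, |z i| ≤ M0
      · have e1 : ∑ i, min |z i| M0 = ∑ i, |z i| :=
          Finset.sum_congr rfl fun i _ => min_eq_left (hall i)
        rw [e1]
        exact le_trans (min_le_left _ _) (l2_le_l1 z)
      · push_neg at hall
        obtain ⟨i0, hi0⟩ := hall
        have e1 : M0 ≤ ∑ i, min |z i| M0 := by
          have e2 : min |z i0| M0 = M0 := min_eq_right hi0.le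
          have e4 : ∀ i ∈ Finset.univ, (0:ℝ) ≤ min |z i| M0 :=
            fun i _ => le_min (abs_nonneg _) hM0.le
          have e5 := Finset.single_le_sum e4 (Finset.mem_univ i0)
          rw [e2] at e5
          exact e5
        exact le_trans (min_le_right _ _) e1
    have htri : l2 (x - xs) ≤ l2 z + l2 w := by
      have h1 := l2_add_le z w
      have h2 : z + w = x - xs := by rw [hz]; abel
      rwa [h2] at h1
    have hle : l2 (x - xs) - l2 w ≤ min (l2 z) M0 :=
      le_min (by linarith) (by linarith [hball, l2_nonneg w])
    calc F M0 / M0 * (l2 (x - xs) - l2 w) ≤ F M0 / M0 * min (l2 z) M0 :=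
          mul_le_mul_of_nonneg_left hle hφ.le
      _ ≤ F M0 / M0 * ∑ i, min |z i| M0 := mul_le_mul_of_nonneg_left hminsum hφ.le
      _ = ∑ i, F M0 / M0 * min |z i| M0 := Finset.mul_sum _ _ _
      _ ≤ ∑ i, F (z i) := Finset.sum_le_sum fun i _ => hmin i
  -- inner product decomposition
  have hipw : ∑ i, (P.mulVec g) i * (x i - xs i) = ∑ i, g i * w i := by
    have h1 := ip_symm g (x - xs)
    rw [hPd] at h1
    calc ∑ i, (P.mulVec g) i * (x i - xs i)
        = ∑ i, (P.mulVec g) i * ((x - xs) i) :=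
          Finset.sum_congr rfl fun i _ => by simp [Pi.sub_apply]
      _ = ∑ i, g i * w i := h1
  have hIP : ∑ i, q i * (x i - xs i)
      = (∑ i, g i * (x i - xs i)) - ∑ i, g i * w i := by
    rw [← hipw, ← Finset.sum_sub_distrib]
    refine Finset.sum_congr rfl fun i _ => ?_
    rw [hqdef]; simp only [Pi.sub_apply]; ring
  have hgw : ∑ i, g i * w i ≤ Real.sqrt N * α * l2 w :=
    le_trans (ip_le_l2 g w) (mul_le_mul_of_nonneg_right hl2g (l2_nonneg w))
  -- numeric assembly
  set r := l2 (x - xs) with hr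
  set E := l2 e with hEd
  set W := l2 w with hWd
  have hrpos : 0 ≤ r := l2_nonneg _
  have hEpos : 0 ≤ E := l2_nonneg _
  have hWpos : 0 ≤ W := l2_nonneg _
  have hsqN : 0 ≤ Real.sqrt N := Real.sqrt_nonneg _
  have hC1pos : 0 < C1 := by
    rw [hC1]
    apply mul_pos hφ
    apply div_pos <;> linarith
  have hC2pos : 0 ≤ C2 := by
    rw [hC2]
    exact div_nonneg (add_nonneg (mul_nonneg hα.1.le hsqN) hC1pos.le)
      (mul_pos hC1pos hσ).le
  have hC1C2 : C1 * C2 * σ = α * Real.sqrt N + C1 := by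
    rw [hC2]; field_simp
  have hWEd : W ≤ E / σ := by rw [le_div_iff₀ hσ]; linarith [hWE]
  have haux1 : C1 / σ ≤ C1 * C2 := by
    rw [div_le_iff₀ hσ]
    nlinarith [mul_nonneg hα.1.le hsqN]
  have haux2 : α * Real.sqrt N / σ ≤ C1 * C2 := by
    rw [div_le_iff₀ hσ]; linarith [hC1C2, hC1pos]
  have hFw : ∑ i, F (w i) ≤ α * (Real.sqrt N * W) := by
    calc ∑ i, F (w i) ≤ ∑ i, α * |w i| := Finset.sum_le_sum fun i _ => hα.2.2 _
      _ = α * l1 w := by rw [l1, Finset.mul_sum]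
      _ ≤ α * (Real.sqrt N * W) := mul_le_mul_of_nonneg_left (l1_le_sqrt_l2 w) hα.1.le
  have hJchain : C1 * (r - W) - α * (Real.sqrt N * W)
      ≤ (∑ i, F (x i)) - ∑ i, F (xs i) := by
    have c1 : C1 * (r - W) ≤ (1 - γ)/(1 + γ) * (∑ i, F (z i)) := by
      rw [hC1]
      calc F M0 / M0 * ((1-γ)/(1+γ)) * (r - W)
          = (1-γ)/(1+γ) * (F M0 / M0 * (r - W)) := by ring
        _ ≤ (1-γ)/(1+γ) * ∑ i, F (z i) :=
            mul_le_mul_of_nonneg_left hJz (by apply div_nonneg <;> linarith)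
    linarith [hγsum, hdz, hJd, hFw, c1]
  have hIPg : C1*(r - W) - α*(Real.sqrt N*W) + ρ * r^2 ≤ ∑ i, g i * (x i - xs i) := by
    linarith [hsum_sub, hJchain]
  have hρr : -(C1/4) * r ≤ ρ * r^2 := by
    nlinarith [mul_le_mul_of_nonneg_right hrho hrpos]
  have m1 : C1 * W ≤ C1*C2*E := by
    have s1 := mul_le_mul_of_nonneg_left hWEd hC1pos.le
    have s2 : C1*(E/σ) = (C1/σ)*E := by ring
    nlinarith [mul_le_mul_of_nonneg_right haux1 hEpos]
  have m2 : α*(Real.sqrt N*W) ≤ C1*C2*E := by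
    have s1 := mul_le_mul_of_nonneg_left hWEd (mul_nonneg hα.1.le hsqN)
    have s2 : α*Real.sqrt N*(E/σ) = (α*Real.sqrt N/σ)*E := by ring
    nlinarith [mul_le_mul_of_nonneg_right haux2 hEpos]
  have hqIP : (3/4)*C1*r - 3*(C1*C2)*E ≤ ∑ i, q i * (x i - xs i) := by
    rw [hIP]
    have hgw' : ∑ i, g i * w i ≤ Real.sqrt N * α * W := hgw
    linarith [hIPg, hgw', hρr, m1, m2]
  have hfar2 : 2*μ*α^2*(N:ℝ)*κ + 4*(C1*C2)*E ≤ C1 * r := by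
    have f1 := mul_le_mul_of_nonneg_left hfar hC1pos.le
    have f2 : C1*(2*μ*α^2*(N:ℝ)/C1*κ + 4*C2*E) = 2*μ*α^2*(N:ℝ)*κ + 4*(C1*C2)*E := by
      field_simp
    rw [f2] at f1
    exact f1
  have hIPfinal : (3/2)*(μ*(α^2*(N:ℝ)*κ)) ≤ ∑ i, q i * (x i - xs i) := by
    have hCCE : 0 ≤ C1*C2*E := mul_nonneg (mul_nonneg hC1pos.le hC2pos) hEpos
    linarith [hqIP, hfar2]
  have hmuNκ : 0 ≤ μ*(α^2*(N:ℝ)*κ^2) :=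
    mul_nonneg (by linarith) (by positivity)
  rw [hexp]
  have hfin : (N:ℝ) * α ^ 2 = (N:ℝ) * α ^ 2 := rfl
  have := final_key (r := r) hκ hμ hq2 hIPfinal hmuNκ
  linarith [this]
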